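/- Let q: Λ²V → Λ²V/R be the quotient map. For each 2 ≤ j < i ≤ n, the dimension of the image q(span{a ∧ b : a, b ∈ L_{ij}}) equals C(j−1,2); in particular L_{ij} is 0-isotropic (i.e. this image is zero) precisely when j = 2, and is C(j−1,2)-isotropic for j ≥ 3. -/
import Mathlib


/-- Index set for the basis `{u_{ij} : 1 ≤ j < i ≤ n}` (`0`-indexed). -/
abbrev RIdx (n : ℕ) := { p : Fin n × Fin n // p.2 < p.1 }

/-- `V = H¹(PΣₙ⁺;ℂ)`, the `ℂ`-vector space with basis `{u_{ij} : j < i}`. -/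
abbrev Vn (n : ℕ) := RIdx n → ℂ

/-- The basis vector `u_{ij}` (for `j < i`). -/
noncomputable def u (n : ℕ) (i j : Fin n) (h : j < i) : Vn n := Pi.single ⟨(i, j), h⟩ 1

/-- The wedge `a ∧ b`, viewed inside the exterior algebra `Λ(V)`. -/
noncomputable def wedge (n : ℕ) (a b : Vn n) : ExteriorAlgebra ℂ (Vn n) :=
  ExteriorAlgebra.ι ℂ a * ExteriorAlgebra.ι ℂ b

/-- The span `R ⊆ Λ²V` of the degree-2 relations `u_{ij} ∧ (u_{ik} − u_{jk})`
(`k < j < i`) of the cohomology ring of `PΣₙ⁺`. -/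
noncomputable def ResRel (n : ℕ) : Submodule ℂ (ExteriorAlgebra ℂ (Vn n)) :=
  Submodule.span ℂ { w | ∃ (i j k : Fin n) (hkj : k < j) (hji : j < i),
    w = wedge n (u n i j hji) (u n i k (hkj.trans hji) - u n j k hkj) }

/-- The first resonance variety `R₁ = {a ∈ V : ∃ b ∉ ℂ·a, a ∧ b ∈ R}`. -/
noncomputable def R1 (n : ℕ) : Set (Vn n) :=
  { a | ∃ b : Vn n, b ∉ Submodule.span ℂ {a} ∧ wedge n a b ∈ ResRel n }

/-- The linear subspace `L_{ij} ⊆ V` (for `j < i`) cut out by the equations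
`x_{il} + x_{jl} = 0` (`l < j`), `x_{il} = 0` (`j < l < i`), and `x_{st} = 0`
(`t < s`, `s ∉ {i,j}`). -/
noncomputable def L (n : ℕ) (i j : Fin n) (hji : j < i) : Submodule ℂ (Vn n) where
  carrier := { a |
    (∀ (l : Fin n) (h : l < j), a ⟨(i, l), h.trans hji⟩ + a ⟨(j, l), h⟩ = 0) ∧
    (∀ (l : Fin n) (h1 : j < l) (h2 : l < i), a ⟨(i, l), h2⟩ = 0) ∧
    (∀ (s t : Fin n) (h : t < s), s ≠ i → s ≠ j → a ⟨(s, t), h⟩ = 0) }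
  zero_mem' := by
    refine ⟨fun l h => ?_, fun l h1 h2 => ?_, fun s t h hs1 hs2 => ?_⟩ <;> simp
  add_mem' := by
    rintro a b ⟨ha1, ha2, ha3⟩ ⟨hb1, hb2, hb3⟩
    refine ⟨fun l h => ?_, fun l h1 h2 => ?_, fun s t h hs1 hs2 => ?_⟩
    · have h1 := ha1 l h; have h2 := hb1 l h
      simp only [Pi.add_apply]
      linear_combination h1 + h2
    · simp only [Pi.add_apply, ha2 l h1 h2, hb2 l h1 h2, add_zero]
    · simp only [Pi.add_apply, ha3 s t h hs1 hs2, hb3 s t h hs1 hs2, add_zero]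
  smul_mem' := by
    rintro c a ⟨ha1, ha2, ha3⟩
    refine ⟨fun l h => ?_, fun l h1 h2 => ?_, fun s t h hs1 hs2 => ?_⟩
    · have h1 := ha1 l h
      simp only [Pi.smul_apply, smul_eq_mul]
      linear_combination c * h1
    · simp only [Pi.smul_apply, ha2 l h1 h2, smul_zero]
    · simp only [Pi.smul_apply, ha3 s t h hs1 hs2, smul_zero]

namespace IsotropAux

open ExteriorAlgebra Submodule

variable {n : ℕ} (i j : Fin n) (hji : j < i)

lemma u_apply (a b : Fin n) (h : b < a) (s t : Fin n) (h' : t < s) :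
    u n a b h ⟨(s, t), h'⟩ = if s = a ∧ t = b then 1 else 0 := by
  rw [u, Pi.single_apply]
  congr 1
  simp [Subtype.ext_iff, Prod.ext_iff]

/-- basis vector of `L`: `v_l = u_{jl} - u_{il}` for `l < j`. -/
noncomputable def vv (l : Fin n) (hl : l < j) : Vn n :=
  u n j l hl - u n i l (hl.trans hji)

/-- second basis vector of `L`: `w = u_{ij}`. -/
noncomputable def ww : Vn n := u n i j hji

lemma vv_apply (l : Fin n) (hl : l < j) (s t : Fin n) (h' : t < s) :
    vv i j hji l hl ⟨(s, t), h'⟩ =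
      (if s = j ∧ t = l then 1 else 0) - (if s = i ∧ t = l then 1 else 0) := by
  simp [vv, u_apply]

lemma ww_apply (s t : Fin n) (h' : t < s) :
    ww i j hji ⟨(s, t), h'⟩ = if s = i ∧ t = j then 1 else 0 := u_apply i j hji s t h'

lemma vv_mem (l : Fin n) (hl : l < j) : vv i j hji l hl ∈ L n i j hji := by
  refine ⟨fun l' h => ?_, fun l' h1 h2 => ?_, fun s t h hs1 hs2 => ?_⟩
  · simp only [vv_apply, hji.ne, hji.ne', false_and, and_false, if_false]
    split_ifs <;> ring
  · have : l' ≠ l := fun e => absurd (e ▸ h1) (asymm hl)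
    simp [vv_apply, hji.ne, hji.ne', this]
  · simp [vv_apply, hs1, hs2]

lemma ww_mem : ww i j hji ∈ L n i j hji := by
  refine ⟨fun l' h => ?_, fun l' h1 h2 => ?_, fun s t h hs1 hs2 => ?_⟩
  · simp [ww_apply, h.ne, hji.ne]
  · simp [ww_apply, h1.ne']
  · simp [ww_apply, hs1]

/-- decomposition of an element of `L` in terms of `vv` and `ww`. -/
lemma L_decomp (a : Vn n) (ha : a ∈ L n i j hji) :
    a = a ⟨(i, j), hji⟩ • ww i j hji +
      ∑ l : Fin n, (if hl : l < j then a ⟨(j, l), hl⟩ • vv i j hji l hl else 0) := by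
  obtain ⟨h1, h2, h3⟩ := ha
  funext p
  obtain ⟨⟨s, t⟩, hts⟩ := p
  rw [Pi.add_apply, Pi.smul_apply, Finset.sum_apply, ww_apply]
  have hsum : ∀ l : Fin n,
      (if hl : l < j then a ⟨(j, l), hl⟩ • vv i j hji l hl else 0) ⟨(s, t), hts⟩ =
      if hl : l < j then
        a ⟨(j, l), hl⟩ * ((if s = j ∧ t = l then 1 else 0) - (if s = i ∧ t = l then 1 else 0))
      else 0 := by
    intro l
    by_cases hl : l < j
    · rw [dif_pos hl, dif_pos hl, Pi.smul_apply, vv_apply, smul_eq_mul]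
    · rw [dif_neg hl, dif_neg hl]; rfl
  simp_rw [hsum]
  rw [Finset.sum_eq_single t ?side1 ?side2]
  case side1 =>
    intro l _ hlt
    have e1 : ¬(s = j ∧ t = l) := fun hc => hlt hc.2.symm
    have e2 : ¬(s = i ∧ t = l) := fun hc => hlt hc.2.symm
    simp [e1, e2]
  case side2 => exact fun h => absurd (Finset.mem_univ t) h
  by_cases hsi : s = i
  · subst hsi
    rcases lt_trichotomy t j with h | h | h
    · simp only [dif_pos h, h.ne, hji.ne', and_true, and_false, true_and, false_and,
        if_false, if_true, eq_self_iff_true, smul_eq_mul]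
      linear_combination h1 t h
    · subst h
      simp
    · rw [h2 t h hts]
      simp [dif_neg (asymm h), h.ne']
  · by_cases hsj : s = j
    · subst hsj
      simp [hsi, dif_pos hts]
    · rw [h3 s t hts hsi hsj]
      simp [hsi, hsj]

/-- generating set of `L`. -/
noncomputable def SB : Set (Vn n) :=
  insert (ww i j hji) {x | ∃ (l : Fin n) (hl : l < j), x = vv i j hji l hl}

lemma L_le_span_SB : L n i j hji ≤ Submodule.span ℂ (SB i j hji) := by
  intro a ha
  rw [L_decomp i j hji a ha]
  refine add_mem (smul_mem _ _ (subset_span (Set.mem_insert _ _))) (sum_mem fun l _ => ?_)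
  by_cases hl : l < j
  · rw [dif_pos hl]
    exact smul_mem _ _ (subset_span (Set.mem_insert_iff.2 (Or.inr ⟨l, hl, rfl⟩)))
  · rw [dif_neg hl]; exact zero_mem _

/-- index type for the pairs `l < m < j`. -/
abbrev TT (j : Fin n) : Type := {p : Fin n × Fin n // p.2 < p.1 ∧ p.1 < j}

/-- the family `q(v_m ∧ v_l)` for `l < m < j`. -/
noncomputable def fam (p : TT j) : ExteriorAlgebra ℂ (Vn n) ⧸ ResRel n :=
  (ResRel n).mkQ (wedge n (vv i j hji p.1.1 p.2.2) (vv i j hji p.1.2 (p.2.1.trans p.2.2)))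

lemma wedge_swap (a b : Vn n) : wedge n a b = -wedge n b a :=
  eq_neg_of_add_eq_zero_left (ExteriorAlgebra.ι_add_mul_swap a b)

lemma wedge_self (a : Vn n) : wedge n a a = 0 := ExteriorAlgebra.ι_sq_zero a

lemma wedge_ww_vv (k : Fin n) (hk : k < j) :
    wedge n (ww i j hji) (vv i j hji k hk) ∈ ResRel n := by
  have h : wedge n (ww i j hji) (vv i j hji k hk) =
      -(wedge n (u n i j hji) (u n i k (hk.trans hji) - u n j k hk)) := by
    rw [wedge, wedge, ww, vv, map_sub, map_sub, mul_sub, mul_sub]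
    abel
  rw [h]
  exact neg_mem (subset_span ⟨i, j, k, hk, hji, rfl⟩)

lemma wedge_vv_ww (k : Fin n) (hk : k < j) :
    wedge n (vv i j hji k hk) (ww i j hji) ∈ ResRel n := by
  rw [wedge_swap]
  exact neg_mem (wedge_ww_vv i j hji k hk)

/-- wedge as a bilinear map. -/
noncomputable def wedgeL : Vn n →ₗ[ℂ] Vn n →ₗ[ℂ] ExteriorAlgebra ℂ (Vn n) :=
  (LinearMap.mul ℂ (ExteriorAlgebra ℂ (Vn n))).compl₁₂
    (ExteriorAlgebra.ι ℂ) (ExteriorAlgebra.ι ℂ)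

lemma wedgeL_apply (a b : Vn n) : wedgeL a b = wedge n a b := rfl

lemma S_eq : Submodule.span ℂ { w | ∃ a ∈ L n i j hji, ∃ b ∈ L n i j hji, w = wedge n a b } =
    Submodule.map₂ wedgeL (L n i j hji) (L n i j hji) := by
  rw [Submodule.map₂_eq_span_image2]
  congr 1
  ext w
  constructor
  · rintro ⟨a, ha, b, hb, rfl⟩; exact ⟨a, ha, b, hb, rfl⟩
  · rintro ⟨a, ha, b, hb, rfl⟩; exact ⟨a, ha, b, hb, rfl⟩

lemma M_eq : Submodule.map (ResRel n).mkQ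
    (Submodule.span ℂ { w | ∃ a ∈ L n i j hji, ∃ b ∈ L n i j hji, w = wedge n a b }) =
    Submodule.span ℂ (Set.range (fam i j hji)) := by
  apply le_antisymm
  · rw [S_eq]
    have h1 : Submodule.map₂ wedgeL (L n i j hji) (L n i j hji) ≤
        Submodule.span ℂ (Set.image2 (fun a b => wedgeL a b) (SB i j hji) (SB i j hji)) := by
      rw [← Submodule.map₂_span_span]
      exact Submodule.map₂_le_map₂ (L_le_span_SB i j hji) (L_le_span_SB i j hji)
    refine le_trans (Submodule.map_mono h1) ?_
    rw [Submodule.map_span, Submodule.span_le]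
    rintro x ⟨y, ⟨a, ha, b, hb, rfl⟩, rfl⟩
    show (ResRel n).mkQ (wedge n a b) ∈ Submodule.span ℂ (Set.range (fam i j hji))
    rcases Set.mem_insert_iff.1 ha with rfl | ⟨l, hl, rfl⟩
    · rcases Set.mem_insert_iff.1 hb with rfl | ⟨m, hm, rfl⟩
      · rw [wedge_self, map_zero]; exact zero_mem _
      · have h0 : (ResRel n).mkQ (wedge n (ww i j hji) (vv i j hji m hm)) = 0 := by
          rw [Submodule.mkQ_apply, Submodule.Quotient.mk_eq_zero]
          exact wedge_ww_vv i j hji m hm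
        rw [h0]; exact zero_mem _
    · rcases Set.mem_insert_iff.1 hb with rfl | ⟨m, hm, rfl⟩
      · have h0 : (ResRel n).mkQ (wedge n (vv i j hji l hl) (ww i j hji)) = 0 := by
          rw [Submodule.mkQ_apply, Submodule.Quotient.mk_eq_zero]
          exact wedge_vv_ww i j hji l hl
        rw [h0]; exact zero_mem _
      · rcases lt_trichotomy l m with h | rfl | h
        · rw [wedge_swap, map_neg]
          exact neg_mem (Submodule.subset_span ⟨⟨(m, l), h, hm⟩, rfl⟩)
        · rw [wedge_self, map_zero]; exact zero_mem _
        · exact Submodule.subset_span ⟨⟨(l, m), h, hl⟩, rfl⟩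
  · rw [Submodule.span_le]
    rintro x ⟨p, rfl⟩
    exact Submodule.mem_map_of_mem (Submodule.subset_span
      ⟨_, vv_mem i j hji p.1.1 p.2.2, _, vv_mem i j hji p.1.2 (p.2.1.trans p.2.2), rfl⟩)

/-- the alternating bilinear form `f ∧ g` of two linear functionals. -/
noncomputable def altOf (f g : Vn n →ₗ[ℂ] ℂ) : (Vn n) [⋀^Fin 2]→ₗ[ℂ] ℂ where
  toFun v := f (v 0) * g (v 1) - f (v 1) * g (v 0)
  map_update_add' := by
    intro _ v k x y
    fin_cases k <;>
      simp [Function.update_self, Function.update_of_ne, Fin.ext_iff, map_add] <;> ring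
  map_update_smul' := by
    intro _ v k c x
    fin_cases k <;>
      simp [Function.update_self, Function.update_of_ne, Fin.ext_iff, map_smul,
        smul_eq_mul] <;> ring
  map_eq_zero_of_eq' := by
    intro v k l hv hkl
    fin_cases k <;> fin_cases l <;> simp_all

@[simp] lemma altOf_apply (f g : Vn n →ₗ[ℂ] ℂ) (v : Fin 2 → Vn n) :
    altOf f g v = f (v 0) * g (v 1) - f (v 1) * g (v 0) := rfl

/-- coordinate projection as a linear functional. -/
noncomputable def cproj (q : RIdx n) : Vn n →ₗ[ℂ] ℂ :=
  LinearMap.proj q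

@[simp] lemma cproj_apply (q : RIdx n) (a : Vn n) : cproj q a = a q := rfl

/-- the family of alternating maps defining the functional `φ_p`. -/
noncomputable def famAlt (p : TT j) : ∀ k : ℕ, (Vn n) [⋀^Fin k]→ₗ[ℂ] ℂ
  | 2 => altOf
      (cproj (⟨(j, p.1.1), p.2.2⟩ : RIdx n))
      (cproj (⟨(j, p.1.2), p.2.1.trans p.2.2⟩ : RIdx n)
        + cproj (⟨(p.1.1, p.1.2), p.2.1⟩ : RIdx n))
  | 0 => 0
  | 1 => 0
  | (_ + 3) => 0

lemma famAlt_two (p : TT j) : famAlt j p 2 = altOf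
      (cproj (⟨(j, p.1.1), p.2.2⟩ : RIdx n))
      (cproj (⟨(j, p.1.2), p.2.1.trans p.2.2⟩ : RIdx n)
        + cproj (⟨(p.1.1, p.1.2), p.2.1⟩ : RIdx n)) := rfl

/-- the functional `φ_p` on the exterior algebra. -/
noncomputable def phi (p : TT j) : ExteriorAlgebra ℂ (Vn n) →ₗ[ℂ] ℂ :=
  ExteriorAlgebra.liftAlternating (famAlt j p)

lemma liftAlt_wedge (f : ∀ k : ℕ, (Vn n) [⋀^Fin k]→ₗ[ℂ] ℂ) (a b : Vn n) :
    ExteriorAlgebra.liftAlternating f (wedge n a b) = f 2 ![a, b] := by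
  rw [wedge, ExteriorAlgebra.liftAlternating_ι_mul, ExteriorAlgebra.liftAlternating_ι,
    AlternatingMap.curryLeft_apply_apply]

lemma phi_wedge (p : TT j) (a b : Vn n) :
    phi j p (wedge n a b) =
      a ⟨(j, p.1.1), p.2.2⟩ *
        (b ⟨(j, p.1.2), p.2.1.trans p.2.2⟩ + b ⟨(p.1.1, p.1.2), p.2.1⟩) -
      b ⟨(j, p.1.1), p.2.2⟩ *
        (a ⟨(j, p.1.2), p.2.1.trans p.2.2⟩ + a ⟨(p.1.1, p.1.2), p.2.1⟩) := by
  rw [phi, liftAlt_wedge, famAlt_two, altOf_apply]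
  simp [Matrix.cons_val_zero, Matrix.cons_val_one, Matrix.head_cons,
    LinearMap.add_apply]

lemma phi_ker (p : TT j) : ResRel n ≤ LinearMap.ker (phi j p) := by
  rw [ResRel, Submodule.span_le]
  rintro x ⟨a, b, k, hkb, hba, rfl⟩
  rw [SetLike.mem_coe, LinearMap.mem_ker, phi_wedge]
  obtain ⟨⟨m, l⟩, hlm, hmj⟩ := p
  simp only [Pi.sub_apply, u_apply]
  have f1 : l.val < m.val := hlm
  have f2 : m.val < j.val := hmj
  have f3 : k.val < b.val := hkb
  have f4 : b.val < a.val := hba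
  by_cases hX : j = a ∧ m = b
  · obtain ⟨rfl, rfl⟩ := hX
    simp only [hmj.ne, hmj.ne', hlm.ne, hlm.ne', and_self, and_true, true_and, false_and,
      and_false, if_true, if_false, eq_self_iff_true]
    split_ifs <;> ring1
  · rw [if_neg hX]
    split_ifs <;>
      first
        | ring1
        | (exfalso; simp only [Fin.ext_iff, not_and] at *; omega)

lemma phi_fam (p q : TT j) :
    phi j p (wedge n (vv i j hji q.1.1 q.2.2) (vv i j hji q.1.2 (q.2.1.trans q.2.2))) =
      if p = q then 1 else 0 := by
  rw [phi_wedge]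
  obtain ⟨⟨m, l⟩, hlm, hmj⟩ := p
  obtain ⟨⟨m', l'⟩, hl'm', hm'j⟩ := q
  have e1 : (j : Fin n) ≠ i := hji.ne
  have e2 : (m : Fin n) ≠ j := hmj.ne
  have e3 : (m : Fin n) ≠ i := (hmj.trans hji).ne
  simp only [vv_apply, Subtype.mk.injEq, Prod.mk.injEq, e1, e2, e3, false_and,
    if_false, true_and, eq_self_iff_true, sub_zero, zero_sub]
  have f1 : l.val < m.val := hlm
  have f2 : m.val < j.val := hmj
  have f3 : l'.val < m'.val := hl'm'
  have f4 : m'.val < j.val := hm'j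
  split_ifs <;>
    first
      | ring1
      | (exfalso; simp only [Fin.ext_iff, not_and] at *; omega)

/-- the functional `φ_p` descended to the quotient. -/
noncomputable def phiQ (p : TT j) : (ExteriorAlgebra ℂ (Vn n) ⧸ ResRel n) →ₗ[ℂ] ℂ :=
  (ResRel n).liftQ (phi j p) (phi_ker j p)

lemma fam_indep : LinearIndependent ℂ (fam i j hji) := by
  classical
  apply LinearIndependent.of_comp (LinearMap.pi (phiQ j))
  have hcomp : (⇑(LinearMap.pi (phiQ j)) ∘ fam i j hji) =
      fun q : TT j => (Pi.single q 1 : TT j → ℂ) := by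
    funext q
    funext p
    simp only [Function.comp_apply, LinearMap.pi_apply, fam, phiQ, Submodule.mkQ_apply,
      Submodule.liftQ_apply]
    rw [phi_fam]
    simp [Pi.single_apply]
  rw [hcomp]
  have h2 : (fun q : TT j => (Pi.single q 1 : TT j → ℂ)) = ⇑(Pi.basisFun ℂ (TT j)) := by
    funext q
    rw [Pi.basisFun_apply]
  rw [h2]
  exact (Pi.basisFun ℂ (TT j)).linearIndependent

lemma card_TT : Fintype.card (TT j) = j.val.choose 2 := by
  classical
  have e : TT j ≃ Σ m : Fin j.val, Fin m.val :=
    { toFun := fun p => ⟨⟨p.1.1.val, p.2.2⟩, ⟨p.1.2.val, p.2.1⟩⟩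
      invFun := fun s => ⟨(⟨s.1.val, s.1.isLt.trans j.isLt⟩,
          ⟨s.2.val, (s.2.isLt.trans s.1.isLt).trans j.isLt⟩),
        Fin.mk_lt_mk.2 s.2.isLt, Fin.mk_lt_mk.2 s.1.isLt⟩
      left_inv := fun p => by
        obtain ⟨⟨⟨mv, hm⟩, ⟨lv, hl⟩⟩, h1, h2⟩ := p
        rfl
      right_inv := fun s => by
        obtain ⟨⟨mv, hm⟩, ⟨lv, hl⟩⟩ := s
        rfl }
  rw [Fintype.card_congr e, Fintype.card_sigma]
  simp only [Fintype.card_fin]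
  rw [Fin.sum_univ_eq_sum_range (fun m => m), Nat.choose_two_right]
  have := Finset.sum_range_id_mul_two j.val
  omega

end IsotropAux
/-- Let `q : Λ²V → Λ²V/R` be the quotient map.  For `2 ≤ j < i ≤ n` (`0`-indexed:
`1 ≤ j.val`), the image under `q` of the span of all wedges `a ∧ b` with
`a, b ∈ L_{ij}` has dimension `C(j−1, 2)` (which in `0`-indexed terms is
`C(j.val, 2)`);  in particular `L_{ij}` is `0`-isotropic (the image vanishes)
precisely when `j = 2` (`0`-indexed: `j.val = 1`). -/
theorem L_isotropicity (n : ℕ) (hn : 3 ≤ n) (i j : Fin n) (hji : j < i)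
    (hj : 1 ≤ j.val) :
    Module.rank ℂ (Submodule.map (ResRel n).mkQ
        (Submodule.span ℂ { w | ∃ a ∈ L n i j hji, ∃ b ∈ L n i j hji, w = wedge n a b })) =
      (j.val.choose 2 : Cardinal) ∧
    (Submodule.map (ResRel n).mkQ
        (Submodule.span ℂ { w | ∃ a ∈ L n i j hji, ∃ b ∈ L n i j hji, w = wedge n a b }) = ⊥ ↔
      j.val = 1) := by
  classical
  have hM := IsotropAux.M_eq i j hji
  have hind := IsotropAux.fam_indep i j hji
  have hrank : Module.rank ℂ (Submodule.map (ResRel n).mkQ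
      (Submodule.span ℂ { w | ∃ a ∈ L n i j hji, ∃ b ∈ L n i j hji, w = wedge n a b })) =
      (Fintype.card (IsotropAux.TT j) : Cardinal) := by
    rw [hM, rank_span hind, Cardinal.mk_range_eq _ hind.injective,
      Cardinal.mk_fintype]
  rw [hrank, IsotropAux.card_TT j]
  constructor
  · rfl
  · rw [← Submodule.rank_eq_zero (R := ℂ), hrank, IsotropAux.card_TT j,
      Nat.cast_eq_zero, Nat.choose_eq_zero_iff]
    omega
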